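/- Let b_n be the coefficient of x^n in x^9(1+x^2)/((1−x)^3(1+x+x^2)). Then b_n / (n^2/3) tends to 1 as n → ∞. -/

import Mathlib

open PowerSeries Filter

/-- Closed-form coefficients. -/
def cc (n : ℕ) : ℚ :=
  if n < 9 then 0 else ((n : ℚ) ^ 2 - 15 * n + 56 + (if 3 ∣ n then 1 else 0)) / 3

lemma cc_key :
    (PowerSeries.mk cc) * ((1 - PowerSeries.X) ^ 3 * (1 + PowerSeries.X + PowerSeries.X ^ 2))
      = (PowerSeries.X : ℚ⟦X⟧) ^ 9 * (1 + PowerSeries.X ^ 2) := by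
  have hsplit : (PowerSeries.mk cc) * ((1 - PowerSeries.X) ^ 3 *
      (1 + PowerSeries.X + PowerSeries.X ^ 2)) =
      ((PowerSeries.mk cc) + (PowerSeries.mk cc) * PowerSeries.X ^ 2
        + (PowerSeries.mk cc) * PowerSeries.X ^ 4 + (PowerSeries.mk cc) * PowerSeries.X ^ 4)
      - ((PowerSeries.mk cc) * PowerSeries.X ^ 1 + (PowerSeries.mk cc) * PowerSeries.X ^ 1
        + (PowerSeries.mk cc) * PowerSeries.X ^ 3 + (PowerSeries.mk cc) * PowerSeries.X ^ 5) := by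
    ring
  have hrhs : (PowerSeries.X : ℚ⟦X⟧) ^ 9 * (1 + PowerSeries.X ^ 2)
      = (PowerSeries.X : ℚ⟦X⟧) ^ 9 + PowerSeries.X ^ 11 := by ring
  rw [hsplit, hrhs]
  ext n
  simp only [map_sub, map_add, PowerSeries.coeff_mul_X_pow', PowerSeries.coeff_mk,
    PowerSeries.coeff_X_pow]
  rcases lt_or_ge n 14 with hn | hn
  · interval_cases n <;> norm_num [cc]
  · obtain ⟨m, rfl⟩ : ∃ m, n = m + 14 := ⟨n - 14, by omega⟩
    rw [if_pos (by omega : 2 ≤ m + 14), if_pos (by omega : 4 ≤ m + 14),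
      if_pos (by omega : 1 ≤ m + 14), if_pos (by omega : 3 ≤ m + 14),
      if_pos (by omega : 5 ≤ m + 14),
      show m + 14 - 2 = m + 12 by omega, show m + 14 - 4 = m + 10 by omega,
      show m + 14 - 1 = m + 13 by omega, show m + 14 - 3 = m + 11 by omega,
      show m + 14 - 5 = m + 9 by omega]
    simp only [cc, if_neg (by omega : ¬ m + 14 < 9), if_neg (by omega : ¬ m + 12 < 9),
      if_neg (by omega : ¬ m + 10 < 9), if_neg (by omega : ¬ m + 13 < 9),
      if_neg (by omega : ¬ m + 11 < 9), if_neg (by omega : ¬ m + 9 < 9)]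
    rw [if_neg (by omega : ¬ m + 14 = 9), if_neg (by omega : ¬ m + 14 = 11)]
    obtain ⟨q, r, hr, rfl⟩ : ∃ q r, r < 3 ∧ m = 3 * q + r :=
      ⟨m / 3, m % 3, Nat.mod_lt _ (by norm_num), by omega⟩
    interval_cases r
    · rw [if_neg (by omega : ¬ 3 ∣ 3 * q + 0 + 14), if_neg (by omega : ¬ 3 ∣ 3 * q + 0 + 13),
        if_pos (by omega : 3 ∣ 3 * q + 0 + 12), if_neg (by omega : ¬ 3 ∣ 3 * q + 0 + 11),
        if_neg (by omega : ¬ 3 ∣ 3 * q + 0 + 10), if_pos (by omega : 3 ∣ 3 * q + 0 + 9)]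
      push_cast; ring
    · rw [if_pos (by omega : 3 ∣ 3 * q + 1 + 14), if_neg (by omega : ¬ 3 ∣ 3 * q + 1 + 13),
        if_neg (by omega : ¬ 3 ∣ 3 * q + 1 + 12), if_pos (by omega : 3 ∣ 3 * q + 1 + 11),
        if_neg (by omega : ¬ 3 ∣ 3 * q + 1 + 10), if_neg (by omega : ¬ 3 ∣ 3 * q + 1 + 9)]
      push_cast; ring
    · rw [if_neg (by omega : ¬ 3 ∣ 3 * q + 2 + 14), if_pos (by omega : 3 ∣ 3 * q + 2 + 13),
        if_neg (by omega : ¬ 3 ∣ 3 * q + 2 + 12), if_neg (by omega : ¬ 3 ∣ 3 * q + 2 + 11),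
        if_pos (by omega : 3 ∣ 3 * q + 2 + 10), if_neg (by omega : ¬ 3 ∣ 3 * q + 2 + 9)]
      push_cast; ring

lemma b_eq (n : ℕ) :
    PowerSeries.coeff (R := ℚ) n
      (PowerSeries.X ^ 9 * (1 + PowerSeries.X ^ 2) *
        (((1 - PowerSeries.X) ^ 3)⁻¹ * (1 + PowerSeries.X + PowerSeries.X ^ 2)⁻¹)) = cc n := by
  have h1 : ((1 - PowerSeries.X : ℚ⟦X⟧) ^ 3) * ((1 - PowerSeries.X) ^ 3)⁻¹ = 1 :=
    PowerSeries.mul_inv_cancel _ (by simp)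
  have h2 : (1 + PowerSeries.X + PowerSeries.X ^ 2 : ℚ⟦X⟧) *
      (1 + PowerSeries.X + PowerSeries.X ^ 2)⁻¹ = 1 :=
    PowerSeries.mul_inv_cancel _ (by simp)
  have : (PowerSeries.X : ℚ⟦X⟧) ^ 9 * (1 + PowerSeries.X ^ 2) *
      (((1 - PowerSeries.X) ^ 3)⁻¹ * (1 + PowerSeries.X + PowerSeries.X ^ 2)⁻¹)
      = PowerSeries.mk cc := by
    calc (PowerSeries.X : ℚ⟦X⟧) ^ 9 * (1 + PowerSeries.X ^ 2) *
        (((1 - PowerSeries.X) ^ 3)⁻¹ * (1 + PowerSeries.X + PowerSeries.X ^ 2)⁻¹)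
        = (PowerSeries.mk cc) *
            ((1 - PowerSeries.X) ^ 3 * (1 + PowerSeries.X + PowerSeries.X ^ 2)) *
            (((1 - PowerSeries.X) ^ 3)⁻¹ * (1 + PowerSeries.X + PowerSeries.X ^ 2)⁻¹) := by
          rw [cc_key]
      _ = (PowerSeries.mk cc) *
            (((1 - PowerSeries.X) ^ 3 * ((1 - PowerSeries.X) ^ 3)⁻¹) *
             ((1 + PowerSeries.X + PowerSeries.X ^ 2) *
              (1 + PowerSeries.X + PowerSeries.X ^ 2)⁻¹)) := by ring
      _ = PowerSeries.mk cc := by rw [h1, h2]; ring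
  rw [this, PowerSeries.coeff_mk]

/-- If `b n` is the coefficient of `x^n` in `x^9(1+x^2)/((1-x)^3(1+x+x^2))`, then
`b n / (n^2/3) → 1` as `n → ∞`. -/
theorem level3_asymptotics (b : ℕ → ℚ)
    (hb : ∀ n, b n = PowerSeries.coeff (R := ℚ) n
      (PowerSeries.X ^ 9 * (1 + PowerSeries.X ^ 2) *
        (((1 - PowerSeries.X) ^ 3)⁻¹ * (1 + PowerSeries.X + PowerSeries.X ^ 2)⁻¹))) :
    Tendsto (fun n : ℕ => (b n : ℝ) / ((n : ℝ) ^ 2 / 3)) atTop (nhds 1) := by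
  have hbc : ∀ n, b n = cc n := fun n => (hb n).trans (b_eq n)
  have hL : Tendsto (fun n : ℕ => 1 - 16 / (n : ℝ)) atTop (nhds 1) := by
    simpa using tendsto_const_nhds.sub (tendsto_const_div_atTop_nhds_zero_nat (16 : ℝ))
  have hU : Tendsto (fun n : ℕ => 1 + 16 / (n : ℝ)) atTop (nhds 1) := by
    simpa using tendsto_const_nhds.add (tendsto_const_div_atTop_nhds_zero_nat (16 : ℝ))
  have hkey : ∀ n : ℕ, 9 ≤ n → ∃ e : ℝ, 0 ≤ e ∧ e ≤ 1 ∧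
      (b n : ℝ) / ((n : ℝ) ^ 2 / 3) = 1 + (-15 * (n : ℝ) + 56 + e) / (n : ℝ) ^ 2 := by
    intro n hn
    have hn0 : (0 : ℝ) < (n : ℝ) := by
      have : (9 : ℝ) ≤ (n : ℝ) := by exact_mod_cast hn
      linarith
    have hbe : (b n : ℝ) = ((n : ℝ) ^ 2 - 15 * n + 56 + (if 3 ∣ n then 1 else 0)) / 3 := by
      rw [hbc n]
      simp only [cc, if_neg (by omega : ¬ n < 9)]
      split_ifs <;> push_cast <;> ring
    refine ⟨if 3 ∣ n then 1 else 0, by split_ifs <;> norm_num, by split_ifs <;> norm_num, ?_⟩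
    rw [hbe]
    field_simp
    ring
  refine tendsto_of_tendsto_of_tendsto_of_le_of_le' hL hU ?_ ?_ <;>
    filter_upwards [eventually_ge_atTop 9] with n hn
  · obtain ⟨e, he0, he1, hk⟩ := hkey n hn
    have hn9 : (9 : ℝ) ≤ (n : ℝ) := by exact_mod_cast hn
    have hn0 : (0 : ℝ) < (n : ℝ) := by linarith
    rw [hk]
    have h1 : -(16 / (n : ℝ)) ≤ (-15 * (n : ℝ) + 56 + e) / (n : ℝ) ^ 2 := by
      rw [neg_div', div_le_div_iff₀ hn0 (by positivity)]
      nlinarith [mul_nonneg he0 hn0.le, sq_nonneg (n : ℝ)]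
    linarith
  · obtain ⟨e, he0, he1, hk⟩ := hkey n hn
    have hn9 : (9 : ℝ) ≤ (n : ℝ) := by exact_mod_cast hn
    have hn0 : (0 : ℝ) < (n : ℝ) := by linarith
    rw [hk]
    have h1 : (-15 * (n : ℝ) + 56 + e) / (n : ℝ) ^ 2 ≤ 16 / (n : ℝ) := by
      rw [div_le_div_iff₀ (by positivity) hn0]
      nlinarith [mul_nonneg he0 hn0.le]
    linarith
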